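/- Let Θ ⊆ ℝ^p and Z be nonempty sets, let δ ∈ (0,1), and let f, f̃ : Z × ℝ^p → ℝ be such that for each z ∈ Z the maps θ ↦ f(z,θ) and θ ↦ f̃(z,θ) are differentiable, with f(z,θ) ≥ δ and f̃(z,θ) ≥ δ for all z ∈ Z, θ ∈ Θ, and with M := sup_{z∈Z,θ∈Θ} ‖∇_θ f(z,θ)‖ < ∞. Set C₁(f) := (1 + M)/δ². Then for every n ≥ 1 and every z₁, …, z_n ∈ Z, sup_{θ∈Θ} ‖(1/n) Σ_{i=1}^n ∇_θ log f̃(z_i,θ) − (1/n) Σ_{i=1}^n ∇_θ log f(z_i,θ)‖ ≤ C₁(f) · ( sup_{z∈Z,θ∈Θ}|f̃(z,θ) − f(z,θ)| + sup_{z∈Z,θ∈Θ}‖∇_θ f̃(z,θ) − ∇_θ f(z,θ)‖ ), provided the suprema on the right-hand side are finite. -/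

import Mathlib

open InnerProductSpace in
lemma gradient_log_comp {p : ℕ} (g : EuclideanSpace ℝ (Fin p) → ℝ)
    (hg : Differentiable ℝ g) (x : EuclideanSpace ℝ (Fin p)) (hx : g x ≠ 0) :
    gradient (fun y => Real.log (g y)) x = (g x)⁻¹ • gradient g x := by
  have h1 : HasFDerivAt g (toDual ℝ _ (gradient g x)) x :=
    (hg x).hasGradientAt.hasFDerivAt
  have h2 := h1.log hx
  have h3 : HasGradientAt (fun y => Real.log (g y))
      ((toDual ℝ (EuclideanSpace ℝ (Fin p))).symm ((g x)⁻¹ • toDual ℝ _ (gradient g x))) x := by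
    rw [hasGradientAt_iff_hasFDerivAt, LinearIsometryEquiv.apply_symm_apply]
    exact h2
  rw [h3.gradient]
  simp
  rfl

/-- The gradient (score) bound in the proof of Theorem 8 of the paper:
`sup_θ ‖(1/n)∑ ∇log f̃(z_i,θ) - (1/n)∑ ∇log f(z_i,θ)‖
  ≤ C₁(f) (sup_{z,θ}|f̃-f| + sup_{z,θ}‖∇f̃-∇f‖)` with `C₁(f) = (1+M)/δ²`,
`M = sup_{z,θ}‖∇_θ f(z,θ)‖`. -/
theorem stmt_7 {p : ℕ} {Z : Type*} [Nonempty Z]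
    (Θ : Set (EuclideanSpace ℝ (Fin p))) (hΘ : Θ.Nonempty)
    (δ : ℝ) (hδ0 : 0 < δ) (hδ1 : δ < 1)
    (f ft : Z → EuclideanSpace ℝ (Fin p) → ℝ)
    (hfd : ∀ z, Differentiable ℝ (f z)) (hftd : ∀ z, Differentiable ℝ (ft z))
    (hf : ∀ z, ∀ θ ∈ Θ, δ ≤ f z θ) (hft : ∀ z, ∀ θ ∈ Θ, δ ≤ ft z θ)
    (hMbdd : BddAbove {x : ℝ | ∃ z, ∃ θ ∈ Θ, x = ‖gradient (f z) θ‖})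
    (hbdd0 : BddAbove {x : ℝ | ∃ z, ∃ θ ∈ Θ, x = |ft z θ - f z θ|})
    (hbdd1 : BddAbove {x : ℝ | ∃ z, ∃ θ ∈ Θ, x = ‖gradient (ft z) θ - gradient (f z) θ‖})
    (n : ℕ) (hn : 1 ≤ n) (zi : Fin n → Z) :
    sSup ((fun θ => ‖(n : ℝ)⁻¹ • ∑ i, gradient (fun θ' => Real.log (ft (zi i) θ')) θ -
        (n : ℝ)⁻¹ • ∑ i, gradient (fun θ' => Real.log (f (zi i) θ')) θ‖) '' Θ) ≤
      ((1 + sSup {x : ℝ | ∃ z, ∃ θ ∈ Θ, x = ‖gradient (f z) θ‖}) / δ ^ 2) *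
        (sSup {x : ℝ | ∃ z, ∃ θ ∈ Θ, x = |ft z θ - f z θ|} +
          sSup {x : ℝ | ∃ z, ∃ θ ∈ Θ, x = ‖gradient (ft z) θ - gradient (f z) θ‖}) := by
  obtain ⟨z0⟩ := ‹Nonempty Z›
  obtain ⟨θ0, hθ0⟩ := hΘ
  set M := sSup {x : ℝ | ∃ z, ∃ θ ∈ Θ, x = ‖gradient (f z) θ‖} with hM
  set S0 := sSup {x : ℝ | ∃ z, ∃ θ ∈ Θ, x = |ft z θ - f z θ|} with hS0
  set S1 := sSup {x : ℝ | ∃ z, ∃ θ ∈ Θ, x = ‖gradient (ft z) θ - gradient (f z) θ‖} with hS1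
  have hMle : ∀ z, ∀ θ ∈ Θ, ‖gradient (f z) θ‖ ≤ M := fun z θ hθ =>
    le_csSup hMbdd ⟨z, θ, hθ, rfl⟩
  have hS0le : ∀ z, ∀ θ ∈ Θ, |ft z θ - f z θ| ≤ S0 := fun z θ hθ =>
    le_csSup hbdd0 ⟨z, θ, hθ, rfl⟩
  have hS1le : ∀ z, ∀ θ ∈ Θ, ‖gradient (ft z) θ - gradient (f z) θ‖ ≤ S1 := fun z θ hθ =>
    le_csSup hbdd1 ⟨z, θ, hθ, rfl⟩
  have hM0 : 0 ≤ M := le_trans (norm_nonneg _) (hMle z0 θ0 hθ0)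
  have hS00 : 0 ≤ S0 := le_trans (abs_nonneg _) (hS0le z0 θ0 hθ0)
  have hS10 : 0 ≤ S1 := le_trans (norm_nonneg _) (hS1le z0 θ0 hθ0)
  set B : ℝ := ((1 + M) / δ ^ 2) * (S0 + S1) with hB
  -- pointwise bound for each z, θ
  have key : ∀ z, ∀ θ ∈ Θ, ‖gradient (fun θ' => Real.log (ft z θ')) θ -
      gradient (fun θ' => Real.log (f z θ')) θ‖ ≤ B := by
    intro z θ hθ
    have hfpos : 0 < f z θ := lt_of_lt_of_le hδ0 (hf z θ hθ)
    have hftpos : 0 < ft z θ := lt_of_lt_of_le hδ0 (hft z θ hθ)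
    rw [gradient_log_comp (ft z) (hftd z) θ hftpos.ne',
      gradient_log_comp (f z) (hfd z) θ hfpos.ne']
    have heq : (ft z θ)⁻¹ • gradient (ft z) θ - (f z θ)⁻¹ • gradient (f z) θ =
        (ft z θ)⁻¹ • (gradient (ft z) θ - gradient (f z) θ) +
        ((ft z θ)⁻¹ - (f z θ)⁻¹) • gradient (f z) θ := by
      rw [smul_sub, sub_smul]; abel
    rw [heq]
    have h1 : ‖(ft z θ)⁻¹ • (gradient (ft z) θ - gradient (f z) θ)‖ ≤ δ⁻¹ * S1 := by
      rw [norm_smul]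
      apply mul_le_mul _ (hS1le z θ hθ) (norm_nonneg _) (by positivity)
      rw [Real.norm_eq_abs, abs_of_pos (inv_pos.mpr hftpos)]
      exact inv_anti₀ hδ0 (hft z θ hθ)
    have h2 : ‖((ft z θ)⁻¹ - (f z θ)⁻¹) • gradient (f z) θ‖ ≤ (S0 / δ ^ 2) * M := by
      rw [norm_smul]
      apply mul_le_mul _ (hMle z θ hθ) (norm_nonneg _) (by positivity)
      rw [Real.norm_eq_abs]
      have : (ft z θ)⁻¹ - (f z θ)⁻¹ = (f z θ - ft z θ) / (ft z θ * f z θ) := by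
        field_simp
      rw [this, abs_div, abs_of_pos (mul_pos hftpos hfpos)]
      rw [div_le_iff₀ (mul_pos hftpos hfpos)]
      have hub : |f z θ - ft z θ| ≤ S0 := by rw [abs_sub_comm]; exact hS0le z θ hθ
      calc |f z θ - ft z θ| ≤ S0 := hub
        _ = S0 / δ ^ 2 * δ ^ 2 := by field_simp
        _ ≤ S0 / δ ^ 2 * (ft z θ * f z θ) := by
            apply mul_le_mul_of_nonneg_left _ (by positivity)
            calc δ ^ 2 = δ * δ := sq δ
              _ ≤ ft z θ * f z θ :=
                mul_le_mul (hft z θ hθ) (hf z θ hθ) hδ0.le hftpos.le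
    calc ‖(ft z θ)⁻¹ • (gradient (ft z) θ - gradient (f z) θ) +
          ((ft z θ)⁻¹ - (f z θ)⁻¹) • gradient (f z) θ‖ ≤
        δ⁻¹ * S1 + (S0 / δ ^ 2) * M := le_trans (norm_add_le _ _) (add_le_add h1 h2)
      _ ≤ B := by
          rw [hB, div_mul_eq_mul_div, div_mul_eq_mul_div] at *
          have hδ2 : 0 < δ ^ 2 := by positivity
          have hinv : δ⁻¹ ≤ (δ ^ 2)⁻¹ := inv_anti₀ hδ2 (by nlinarith)
          calc δ⁻¹ * S1 + S0 * M / δ ^ 2 ≤ (δ ^ 2)⁻¹ * S1 + S0 * M / δ ^ 2 :=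
                add_le_add_left (mul_le_mul_of_nonneg_right hinv hS10) _
            _ = (S1 + S0 * M) / δ ^ 2 := by ring
            _ ≤ (1 + M) * (S0 + S1) / δ ^ 2 := by
                gcongr
                nlinarith [mul_nonneg hS10 hM0]
    -- end key
  have hB0 : 0 ≤ B := by positivity
  apply Real.sSup_le _ _
  · rintro x ⟨θ, hθ, rfl⟩
    simp only
    rw [← smul_sub, ← Finset.sum_sub_distrib, norm_smul]
    have hn0 : (0 : ℝ) < n := by exact_mod_cast hn
    rw [Real.norm_eq_abs, abs_of_pos (inv_pos.mpr hn0)]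
    calc (n : ℝ)⁻¹ * ‖∑ i, (gradient (fun θ' => Real.log (ft (zi i) θ')) θ -
            gradient (fun θ' => Real.log (f (zi i) θ'))  θ)‖
        ≤ (n : ℝ)⁻¹ * ∑ i : Fin n, B := by
          apply mul_le_mul_of_nonneg_left _ (by positivity)
          exact le_trans (norm_sum_le _ _)
            (Finset.sum_le_sum fun i _ => key (zi i) θ hθ)
      _ = B := by
          rw [Finset.sum_const, Finset.card_fin, nsmul_eq_mul]
          field_simp
  · exact hB0
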